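/- Let F : ℝ^d → ℝ be differentiable with L-Lipschitz gradient, let ν > 0, θ > 0, 1 ≤ N ≤ d, and fix x ∈ ℝ^d. Let G : Ω → ℝ^d be a square-integrable random vector on a probability space with E[G] = ∇^{FD}F(x) and E‖G‖² ≤ (1 + θ²)·(d/N)·‖∇^{FD}F(x)‖² (as holds for the randomized coordinate finite-difference estimator under the theoretical norm condition). If the step size satisfies 0 < α ≤ N/(4·d·(1 + θ²)·L), then E[F(x − α·G)] ≤ F(x) − (α/4)·‖∇F(x)‖² + (3·α·L²·ν²·d)/16. -/

import Mathlib

open MeasureTheory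

set_option maxHeartbeats 1000000

open MeasureTheory

lemma grad_inner' {E : Type*} [NormedAddCommGroup E] [InnerProductSpace ℝ E] [CompleteSpace E]
    (F : E → ℝ) (w v : E) : (inner ℝ (gradient F w) v : ℝ) = fderiv ℝ F w v :=
  InnerProductSpace.toDual_symm_apply

lemma quad_bound {E : Type*} [NormedAddCommGroup E] [InnerProductSpace ℝ E] [CompleteSpace E]
    (F : E → ℝ) (L : ℝ) (hL : 0 ≤ L) (hF : Differentiable ℝ F)
    (hLip : ∀ a b, ‖gradient F a - gradient F b‖ ≤ L * ‖a - b‖) (x y : E) :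
    |F y - F x - inner ℝ (gradient F x) (y - x)| ≤ L / 2 * ‖y - x‖ ^ 2 := by
  set v := y - x with hv
  have hgc : Continuous (gradient F) := by
    refine (LipschitzWith.of_dist_le_mul (K := ⟨L, hL⟩) fun a b => ?_).continuous
    rw [dist_eq_norm, dist_eq_norm]; exact hLip a b
  have key : ∀ z : ℝ, HasDerivAt (fun t : ℝ => F (x + t • v))
      (inner ℝ (gradient F (x + z • v)) v) z := by
    intro z
    have h1 : HasDerivAt (fun t : ℝ => x + t • v) v z := by
      simpa using ((hasDerivAt_id z).smul_const v).const_add x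
    have h2 := ((hF (x + z • v)).hasFDerivAt).comp_hasDerivAt z h1
    rw [grad_inner']; exact h2
  have hcont : Continuous fun t : ℝ => (inner ℝ (gradient F (x + t • v)) v : ℝ) :=
    (hgc.comp (by continuity)).inner continuous_const
  have hInt : F y - F x = ∫ t in (0:ℝ)..1, (inner ℝ (gradient F (x + t • v)) v : ℝ) := by
    have h := intervalIntegral.integral_eq_sub_of_hasDerivAt (f := fun t : ℝ => F (x + t • v))
      (fun t _ => key t) (hcont.intervalIntegrable 0 1)
    simpa [hv] using h.symm
  have hconst : (inner ℝ (gradient F x) v : ℝ)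
      = ∫ t in (0:ℝ)..1, (inner ℝ (gradient F x) v : ℝ) := by simp
  rw [hInt, hconst, ← intervalIntegral.integral_sub (hcont.intervalIntegrable 0 1)
    (intervalIntegrable_const)]
  have hbc : Continuous fun t : ℝ =>
      |(inner ℝ (gradient F (x + t • v)) v : ℝ) - inner ℝ (gradient F x) v| :=
    (hcont.sub continuous_const).abs
  calc |∫ t in (0:ℝ)..1, ((inner ℝ (gradient F (x + t • v)) v : ℝ) - inner ℝ (gradient F x) v)|
      ≤ ∫ t in (0:ℝ)..1, |(inner ℝ (gradient F (x + t • v)) v : ℝ) - inner ℝ (gradient F x) v| :=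
        intervalIntegral.abs_integral_le_integral_abs zero_le_one
    _ ≤ ∫ t in (0:ℝ)..1, (L * ‖v‖ ^ 2) * t := by
        refine intervalIntegral.integral_mono_on zero_le_one (hbc.intervalIntegrable 0 1)
          ((continuous_const.mul continuous_id).intervalIntegrable 0 1) fun t ht => ?_
        rw [← inner_sub_left]
        calc |(inner ℝ (gradient F (x + t • v) - gradient F x) v : ℝ)|
            ≤ ‖gradient F (x + t • v) - gradient F x‖ * ‖v‖ := abs_real_inner_le_norm _ _
          _ ≤ (L * ‖(x + t • v) - x‖) * ‖v‖ := by
              gcongr; exact hLip _ _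
          _ = (L * ‖v‖ ^ 2) * t := by
              have ht0 : (0:ℝ) ≤ t := ht.1
              simp [norm_smul, abs_of_nonneg ht0, sq]
              ring
    _ = L / 2 * ‖v‖ ^ 2 := by
        rw [intervalIntegral.integral_const_mul, integral_id]
        ring


/-- The forward finite-difference gradient estimator
`∇^{FD}F(x) := ∑ⱼ ((F(x + ν eⱼ) − F(x))/ν) eⱼ`. -/
noncomputable def fdGrad {d : ℕ} (F : EuclideanSpace ℝ (Fin d) → ℝ) (ν : ℝ)
    (x : EuclideanSpace ℝ (Fin d)) : EuclideanSpace ℝ (Fin d) :=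
  ∑ j, ((F (x + ν • EuclideanSpace.single j (1 : ℝ)) - F x) / ν) •
    EuclideanSpace.single j (1 : ℝ)

lemma fdGrad_apply {d : ℕ} (F : EuclideanSpace ℝ (Fin d) → ℝ) (ν : ℝ)
    (x : EuclideanSpace ℝ (Fin d)) (i : Fin d) :
    fdGrad F ν x i = (F (x + ν • EuclideanSpace.single i (1 : ℝ)) - F x) / ν := by
  rw [fdGrad, WithLp.ofLp_sum, Finset.sum_apply]
  simp [EuclideanSpace.single_apply]

lemma norm_sq_eq {d : ℕ} (w : EuclideanSpace ℝ (Fin d)) : ‖w‖ ^ 2 = ∑ j, (w j) ^ 2 := by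
  rw [EuclideanSpace.norm_eq, Real.sq_sqrt (by positivity)]
  simp [sq_abs]

lemma fd_err {d : ℕ} (F : EuclideanSpace ℝ (Fin d) → ℝ) (L ν : ℝ)
    (hν : 0 < ν)
    (hquad : ∀ x y : EuclideanSpace ℝ (Fin d),
      |F y - F x - inner ℝ (gradient F x) (y - x)| ≤ L / 2 * ‖y - x‖ ^ 2)
    (x : EuclideanSpace ℝ (Fin d)) :
    ‖fdGrad F ν x - gradient F x‖ ^ 2 ≤ L ^ 2 * ν ^ 2 * d / 4 := by
  rw [norm_sq_eq]
  have hcomp : ∀ j, ((fdGrad F ν x - gradient F x) j) ^ 2 ≤ (L * ν / 2) ^ 2 := by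
    intro j
    have happ : (fdGrad F ν x - gradient F x) j
        = (F (x + ν • EuclideanSpace.single j (1:ℝ)) - F x) / ν - gradient F x j := by
      simp [fdGrad_apply]
    have hq := hquad x (x + ν • EuclideanSpace.single j (1:ℝ))
    rw [add_sub_cancel_left] at hq
    have hinner : (inner ℝ (gradient F x) (ν • EuclideanSpace.single j (1:ℝ)) : ℝ)
        = ν * gradient F x j := by
      rw [real_inner_smul_right, EuclideanSpace.inner_single_right]
      simp
    have hnorm : ‖ν • EuclideanSpace.single j (1:ℝ)‖ = ν := by
      simp [norm_smul, abs_of_pos hν]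
    rw [hinner, hnorm] at hq
    have habs : |(fdGrad F ν x - gradient F x) j| ≤ L * ν / 2 := by
      rw [happ]
      have : (F (x + ν • EuclideanSpace.single j (1:ℝ)) - F x) / ν - gradient F x j
          = (F (x + ν • EuclideanSpace.single j (1:ℝ)) - F x - ν * gradient F x j) / ν := by
        field_simp
      rw [this, abs_div, abs_of_pos hν, div_le_iff₀ hν]
      calc |F (x + ν • EuclideanSpace.single j (1:ℝ)) - F x - ν * gradient F x j|
          ≤ L / 2 * ν ^ 2 := hq
        _ = L * ν / 2 * ν := by ring
    calc ((fdGrad F ν x - gradient F x) j) ^ 2 = |(fdGrad F ν x - gradient F x) j| ^ 2 := by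
          rw [sq_abs]
      _ ≤ (L * ν / 2) ^ 2 := by gcongr
  calc ∑ j, ((fdGrad F ν x - gradient F x) j) ^ 2 ≤ ∑ _j : Fin d, (L * ν / 2) ^ 2 :=
        Finset.sum_le_sum fun j _ => hcomp j
    _ = d * (L * ν / 2) ^ 2 := by simp [Finset.sum_const, Finset.card_univ, nsmul_eq_mul]
    _ = L ^ 2 * ν ^ 2 * d / 4 := by ring

/-- If `F` has `L`-Lipschitz gradient, `1 ≤ N ≤ d`, `G` is a
square-integrable random vector with `E[G] = ∇^{FD}F(x)` and
`E‖G‖² ≤ (1+θ²)(d/N)‖∇^{FD}F(x)‖²` (as holds for the randomized coordinate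
finite-difference estimator under the theoretical norm condition), and
`0 < α ≤ N/(4d(1+θ²)L)`, then
`E[F(x − α G)] ≤ F(x) − (α/4)‖∇F(x)‖² + 3 α L² ν² d / 16`. -/
theorem per_iteration_decrease_RC
    {d N : ℕ} {Ω : Type*} {mΩ : MeasurableSpace Ω}
    (P : Measure Ω) [IsProbabilityMeasure P]
    (F : EuclideanSpace ℝ (Fin d) → ℝ) (L ν θ α : ℝ)
    (hF : Differentiable ℝ F)
    (hLip : ∀ x y, ‖gradient F x - gradient F y‖ ≤ L * ‖x - y‖)
    (hν : 0 < ν) (hθ : 0 < θ) (hN1 : 1 ≤ N) (hNd : N ≤ d)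
    (x : EuclideanSpace ℝ (Fin d))
    (G : Ω → EuclideanSpace ℝ (Fin d)) (hG : MemLp G 2 P)
    (hmean : ∫ ω, G ω ∂P = fdGrad F ν x)
    (hsecond : ∫ ω, ‖G ω‖ ^ 2 ∂P
      ≤ (1 + θ ^ 2) * ((d : ℝ) / (N : ℝ)) * ‖fdGrad F ν x‖ ^ 2)
    (hα0 : 0 < α) (hα : α ≤ (N : ℝ) / (4 * (d : ℝ) * (1 + θ ^ 2) * L)) :
    ∫ ω, F (x - α • G ω) ∂P
      ≤ F x - (α / 4) * ‖gradient F x‖ ^ 2 + 3 * α * L ^ 2 * ν ^ 2 * d / 16 := by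
  have hN0 : (0:ℝ) < N := by exact_mod_cast hN1
  have hd0 : (0:ℝ) < d := by
    have : 0 < d := by omega
    exact_mod_cast this
  have hθ2 : (0:ℝ) < 1 + θ ^ 2 := by positivity
  have hL : 0 < L := by
    by_contra h
    push_neg at h
    have hden : 4 * (d:ℝ) * (1 + θ ^ 2) * L ≤ 0 :=
      mul_nonpos_of_nonneg_of_nonpos (by positivity) h
    have : (N:ℝ) / (4 * (d:ℝ) * (1 + θ ^ 2) * L) ≤ 0 :=
      div_nonpos_of_nonneg_of_nonpos hN0.le hden
    linarith
  have hquad := quad_bound F L hL.le hF hLip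
  set g := gradient F x with hg
  set gf := fdGrad F ν x with hgf
  set A := ‖g‖ with hA
  set B := ‖gf‖ with hB
  set E := ‖gf - g‖ with hE
  -- pointwise descent bound
  have hpt : ∀ ω, F (x - α • G ω)
      ≤ F x - α * inner ℝ g (G ω) + L / 2 * α ^ 2 * ‖G ω‖ ^ 2 := by
    intro ω
    have hq := (abs_le.1 (hquad x (x - α • G ω))).2
    have h1 : (inner ℝ g ((x - α • G ω) - x) : ℝ) = -(α * inner ℝ g (G ω)) := by
      rw [show (x - α • G ω) - x = -(α • G ω) by abel, inner_neg_right, real_inner_smul_right]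
    have h2 : ‖(x - α • G ω) - x‖ ^ 2 = α ^ 2 * ‖G ω‖ ^ 2 := by
      rw [show (x - α • G ω) - x = -(α • G ω) by abel, norm_neg, norm_smul, Real.norm_eq_abs]
      rw [abs_of_pos hα0]; ring
    rw [h1, h2] at hq
    linarith
  -- integrability
  have hGm : AEStronglyMeasurable G P := hG.1
  have hGint : Integrable G P := hG.integrable one_le_two
  have hInt1 : Integrable (fun ω => (inner ℝ g (G ω) : ℝ)) P := hGint.const_inner g
  have hInt2 : Integrable (fun ω => ‖G ω‖ ^ 2) P := hG.norm.integrable_sq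
  have hIntR : Integrable
      (fun ω => F x - α * inner ℝ g (G ω) + L / 2 * α ^ 2 * ‖G ω‖ ^ 2) P :=
    ((integrable_const _).sub (hInt1.const_mul α)).add (hInt2.const_mul _)
  have hIntL : Integrable (fun ω => F (x - α • G ω)) P := by
    refine Integrable.mono'
      (g := fun ω => |F x| + (α * A) * ‖G ω‖ + L / 2 * α ^ 2 * ‖G ω‖ ^ 2)
      (((integrable_const _).add (hGint.norm.const_mul _)).add (hInt2.const_mul _))
      (hF.continuous.comp_aestronglyMeasurable
        (aestronglyMeasurable_const.sub (hGm.const_smul α))) ?_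
    filter_upwards with ω
    have hq := hquad x (x - α • G ω)
    have h2 : ‖(x - α • G ω) - x‖ ^ 2 = α ^ 2 * ‖G ω‖ ^ 2 := by
      rw [show (x - α • G ω) - x = -(α • G ω) by abel, norm_neg, norm_smul, Real.norm_eq_abs]
      rw [abs_of_pos hα0]; ring
    have hip : |(inner ℝ g ((x - α • G ω) - x) : ℝ)| ≤ A * (α * ‖G ω‖) := by
      calc |(inner ℝ g ((x - α • G ω) - x) : ℝ)| ≤ A * ‖(x - α • G ω) - x‖ :=
            abs_real_inner_le_norm _ _
        _ = A * (α * ‖G ω‖) := by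
            rw [show (x - α • G ω) - x = -(α • G ω) by abel, norm_neg, norm_smul,
              Real.norm_eq_abs, abs_of_pos hα0]
    rw [h2] at hq
    rw [Real.norm_eq_abs]
    set ip : ℝ := inner ℝ g ((x - α • G ω) - x) with hipdef
    have e1 : |F (x - α • G ω) - (F x + ip)| ≤ L / 2 * (α ^ 2 * ‖G ω‖ ^ 2) := by
      rw [show F (x - α • G ω) - (F x + ip) = F (x - α • G ω) - F x - ip by ring]
      exact hq
    have e2 := abs_sub_abs_le_abs_sub (F (x - α • G ω)) (F x + ip)
    have e3 := abs_add_le (F x) ip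
    have hAA : A * (α * ‖G ω‖) = (α * A) * ‖G ω‖ := by ring
    rw [hAA] at hip
    have h4 : L / 2 * (α ^ 2 * ‖G ω‖ ^ 2) = L / 2 * α ^ 2 * ‖G ω‖ ^ 2 := by ring
    linarith
  -- take expectations
  have hmono : ∫ ω, F (x - α • G ω) ∂P
      ≤ ∫ ω, (F x - α * inner ℝ g (G ω) + L / 2 * α ^ 2 * ‖G ω‖ ^ 2) ∂P :=
    integral_mono hIntL hIntR hpt
  have hR : ∫ ω, (F x - α * inner ℝ g (G ω) + L / 2 * α ^ 2 * ‖G ω‖ ^ 2) ∂P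
      = F x - α * inner ℝ g gf + L / 2 * α ^ 2 * ∫ ω, ‖G ω‖ ^ 2 ∂P := by
    have i1 : ∫ ω, (inner ℝ g (G ω) : ℝ) ∂P = inner ℝ g gf := by
      rw [integral_inner hGint, hmean]
    have hf1 : Integrable (fun ω => F x - α * (inner ℝ g (G ω) : ℝ)) P :=
      (integrable_const (F x)).sub (hInt1.const_mul α)
    have hf2 : Integrable (fun ω => L / 2 * α ^ 2 * ‖G ω‖ ^ 2) P :=
      hInt2.const_mul _
    rw [integral_add hf1 hf2,
      integral_sub (integrable_const (F x)) (hInt1.const_mul α),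
      integral_const, integral_const_mul, integral_const_mul, i1]
    simp
  -- second-moment bound
  have hSnn : (0:ℝ) ≤ ∫ ω, ‖G ω‖ ^ 2 ∂P := integral_nonneg fun ω => by positivity
  have hterm3 : L / 2 * α ^ 2 * ∫ ω, ‖G ω‖ ^ 2 ∂P ≤ α / 8 * B ^ 2 := by
    have hK : L * α * ((1 + θ ^ 2) * ((d:ℝ) / N)) ≤ 1 / 4 := by
      rw [show L * α * ((1 + θ ^ 2) * ((d:ℝ) / N)) = (L * α * (1 + θ ^ 2) * d) / N by ring,
        div_le_iff₀ hN0]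
      have hα' : α * (4 * (d:ℝ) * (1 + θ ^ 2) * L) ≤ N := by
        rw [← le_div_iff₀ (by positivity)]
        exact hα
      nlinarith
    have h1 : L / 2 * α ^ 2 * ∫ ω, ‖G ω‖ ^ 2 ∂P
        ≤ L / 2 * α ^ 2 * ((1 + θ ^ 2) * ((d:ℝ) / N) * B ^ 2) :=
      mul_le_mul_of_nonneg_left hsecond (by positivity : (0:ℝ) ≤ L / 2 * α ^ 2)
    refine h1.trans ?_
    have h2 : (α / 2 * B ^ 2) * (L * α * ((1 + θ ^ 2) * ((d:ℝ) / N)))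
        ≤ (α / 2 * B ^ 2) * (1 / 4) :=
      mul_le_mul_of_nonneg_left hK (by positivity)
    calc L / 2 * α ^ 2 * ((1 + θ ^ 2) * ((d:ℝ) / N) * B ^ 2)
        = (α / 2 * B ^ 2) * (L * α * ((1 + θ ^ 2) * ((d:ℝ) / N))) := by ring
      _ ≤ (α / 2 * B ^ 2) * (1 / 4) := h2
      _ = α / 8 * B ^ 2 := by ring
  -- inner product lower bound
  have hI : A ^ 2 - A * E ≤ (inner ℝ g gf : ℝ) := by
    have h1 : (inner ℝ g gf : ℝ) = (inner ℝ g g : ℝ) + inner ℝ g (gf - g) := by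
      rw [← inner_add_right]; congr 1; abel
    have h2 : (inner ℝ g g : ℝ) = A ^ 2 := real_inner_self_eq_norm_sq g
    have h3 : -(A * E) ≤ (inner ℝ g (gf - g) : ℝ) :=
      neg_le_of_abs_le (abs_real_inner_le_norm _ _)
    linarith
  have hBle : B ≤ A + E := by
    calc B = ‖g + (gf - g)‖ := by rw [hB]; congr 1; abel
      _ ≤ A + E := norm_add_le _ _
  have hE2 : E ^ 2 ≤ L ^ 2 * ν ^ 2 * d / 4 := fd_err F L ν hν hquad x
  have hBsq : B ^ 2 ≤ (A + E) ^ 2 := by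
    have hB0 : (0:ℝ) ≤ B := norm_nonneg _
    nlinarith
  have hA0 : (0:ℝ) ≤ A := norm_nonneg _
  have hE0 : (0:ℝ) ≤ E := norm_nonneg _
  calc ∫ ω, F (x - α • G ω) ∂P
      ≤ F x - α * inner ℝ g gf + L / 2 * α ^ 2 * ∫ ω, ‖G ω‖ ^ 2 ∂P := by rw [← hR]; exact hmono
    _ ≤ F x - α * inner ℝ g gf + α / 8 * B ^ 2 := by linarith
    _ ≤ F x - (α / 4) * A ^ 2 + 3 * α * L ^ 2 * ν ^ 2 * d / 16 := by
        nlinarith [mul_nonneg hα0.le (sq_nonneg (A - E)),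
          mul_le_mul_of_nonneg_left hI hα0.le,
          mul_le_mul_of_nonneg_left hBsq (by positivity : (0:ℝ) ≤ α / 8),
          mul_le_mul_of_nonneg_left hE2 (by positivity : (0:ℝ) ≤ 3 * α / 4)]
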